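/- The recursive grafting form of Tonks' vertex map agrees with its splitting form: for every permutation π ∈ S_n (n ≥ 0), the tree φ̂(π) defined by φ̂(∅) = *, φ̂(π) = t for n = 1, and φ̂(π) = φ̂(std(π_2⋯π_n)) ◁_{π_1} t for n > 1, equals the tree φ(π) defined by φ(∅) = * and φ(π) = φ(std(π^{<π_n})) ∨ φ(std(π^{>π_n})) for n > 0. -/

import Mathlib

/-- Indexed terms of the language `L^I`: generators `2^k` and partial compositions. -/
inductive Trm : Type
  | gen : ℕ → Trm
  | comp : Trm → ℕ → Trm → Trm
deriving DecidableEq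

namespace Trm

/-- Arity `|A|`. -/
def arity : Trm → ℕ
  | gen _ => 2
  | comp A _ B => A.arity + B.arity - 1

/-- Set of indices occurring in a term. -/
def ind : Trm → Finset ℕ
  | gen k => {k}
  | comp A _ B => A.ind ∪ B.ind

/-- Root index. -/
def root : Trm → ℕ
  | gen k => k
  | comp A _ _ => A.root

/-- Number of occurrences of the generator. -/
def countGen : Trm → ℕ
  | gen _ => 1
  | comp A _ B => A.countGen + B.countGen

end Trm

/-- The congruence `=_I` generated by (assoc1) and (assoc2). -/
inductive IEq : Trm → Trm → Prop
  | refl (A : Trm) : IEq A A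
  | symm {A B} : IEq A B → IEq B A
  | trans {A B C} : IEq A B → IEq B C → IEq A C
  | congr {A A' B B'} (n : ℕ) : IEq A A' → IEq B B' →
      IEq (Trm.comp A n B) (Trm.comp A' n B')
  | assoc1 (A B C : Trm) (n m : ℕ) : n ≤ m → m < n + B.arity →
      IEq (Trm.comp (Trm.comp A n B) m C) (Trm.comp A n (Trm.comp B (m - n + 1) C))
  | assoc2 (A B C : Trm) (n m : ℕ) : n + B.arity ≤ m →
      IEq (Trm.comp (Trm.comp A n B) m C) (Trm.comp (Trm.comp A (m - B.arity + 1) C) n B)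

/-- Planar binary trees. -/
inductive BT : Type
  | leaf : BT
  | node : BT → BT → BT
deriving DecidableEq

namespace BT

/-- Number of leaves. -/
def leaves : BT → ℕ
  | leaf => 1
  | node l r => l.leaves + r.leaves

/-- Graft `S` at the `i`-th leaf (1-indexed) of a tree. -/
def graft : BT → ℕ → BT → BT
  | leaf, _, S => S
  | node l r, i, S =>
    if i ≤ l.leaves then node (l.graft i S) r else node l (r.graft (i - l.leaves) S)

end BT

/-- Evaluation `ε` of indexed terms to planar binary trees. -/
def Trm.eval : Trm → BT
  | Trm.gen _ => BT.node BT.leaf BT.leaf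
  | Trm.comp A i B => A.eval.graft i B.eval

/-- `l`-factors. -/
inductive LFactor : Trm → Prop
  | gen (k : ℕ) : LFactor (Trm.gen k)
  | step {A : Trm} (j : ℕ) : LFactor A → j ∉ A.ind →
      LFactor (Trm.comp A ((A.ind.filter (· < j)).card + 1) (Trm.gen j))

/-- Auxiliary for the head-insertion encoding: `done` is the list of already
inserted letters. -/
def hAux : Trm → List ℕ → List ℕ → Trm
  | A, _, [] => A
  | A, done, y :: rest =>
      hAux (Trm.comp A ((done.filter (· < y)).length + 1) (Trm.gen y)) (done ++ [y]) rest

/-- Head-insertion encoding `h` (junk value on the empty word). -/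
def hWord : List ℕ → Trm
  | [] => Trm.gen 0
  | x :: rest => hAux (Trm.gen x) [x] rest

/-- `u_a(x)`: number of letters to the left of `x` in `a` that are greater than `x`. -/
def uCount (a : List ℕ) (x : ℕ) : ℕ := ((a.takeWhile (· ≠ x)).filter (x < ·)).length

/-- Decreasing rearrangement of a word. -/
def sortDesc (a : List ℕ) : List ℕ := (a.mergeSort (· ≤ ·)).reverse

/-- Decreasing encoding `f` (junk value on the empty word). -/
def fWord (a : List ℕ) : Trm :=
  match sortDesc a with
  | [] => Trm.gen 0
  | k :: rest => rest.foldl (fun A x => Trm.comp A (uCount a x + 1) (Trm.gen x)) (Trm.gen k)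

/-- Standardization of a word of distinct integers. -/
def std (a : List ℕ) : List ℕ := a.map (fun x => (a.filter (· ≤ x)).length)

/-- Tonks' vertex map, splitting form `φ`. -/
def tonksPhi (a : List ℕ) : BT :=
  match ha : a.getLast? with
  | none => BT.leaf
  | some x =>
      BT.node (tonksPhi (std (a.filter (· < x)))) (tonksPhi (std (a.filter (x < ·))))
termination_by a.length
decreasing_by
  · have hx : x ∈ a := List.mem_of_mem_getLast? (Option.mem_def.mpr ha)
    have : (a.filter (· < x)).length < a.length := by
      apply List.length_filter_lt_length_iff_exists.2
      exact ⟨x, hx, by simp⟩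
    first
    | simpa [std] using this
    | (simp [std]; exact lt_of_lt_of_eq (List.length_filter_lt_length_iff_exists.2 ⟨⟨x, hx⟩, List.mem_attach _ _, by simp⟩) List.length_attach)
  · have hx : x ∈ a := List.mem_of_mem_getLast? (Option.mem_def.mpr ha)
    have : (a.filter (x < ·)).length < a.length := by
      apply List.length_filter_lt_length_iff_exists.2
      exact ⟨x, hx, by simp⟩
    first
    | simpa [std] using this
    | (simp [std]; exact lt_of_lt_of_eq (List.length_filter_lt_length_iff_exists.2 ⟨⟨x, hx⟩, List.mem_attach _ _, by simp⟩) List.length_attach)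

/-- Tonks' vertex map, head-grafting form `φ̂`. -/
def phiHat : List ℕ → BT
  | [] => BT.leaf
  | x :: rest => (phiHat (std rest)).graft x (BT.node BT.leaf BT.leaf)
termination_by a => a.length
decreasing_by
  simp [std]

/-- The Loday–Ronco map `ψ`. -/
def lodayPsi (a : List ℕ) : BT :=
  match hm : a.maximum with
  | none => BT.leaf
  | some m =>
      let i := a.idxOf m
      BT.node (lodayPsi (std (a.take i))) (lodayPsi (std (a.drop (i + 1))))
termination_by a.length
decreasing_by
  · have hmem : m ∈ a := List.maximum_mem hm
    have hi : a.idxOf m < a.length := List.idxOf_lt_length_iff.2 hmem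
    simp only [std, List.length_map, List.length_take]
    omega
  · have : a ≠ [] := by rintro rfl; simp [List.maximum] at hm
    have : 0 < a.length := List.length_pos_iff.2 this
    simp only [std, List.length_map, List.length_drop]
    omega

/-- Inverse of a permutation word on `{1,…,n}`. -/
def invWord (π : List ℕ) : List ℕ :=
  (List.range π.length).map (fun j => π.idxOf (j + 1) + 1)

/-- One Tamari (right rotation) step, at any subtree. -/
inductive TamariStep : BT → BT → Prop
  | rot (X Y Z : BT) : TamariStep (BT.node (BT.node X Y) Z) (BT.node X (BT.node Y Z))
  | left {l l'} (r : BT) : TamariStep l l' → TamariStep (BT.node l r) (BT.node l' r)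
  | right (l : BT) {r r'} : TamariStep r r' → TamariStep (BT.node l r) (BT.node l r')

/-- The Tamari order. -/
def TamariLE : BT → BT → Prop := Relation.ReflTransGen TamariStep

/-- The strict Tamari order. -/
def TamariLT : BT → BT → Prop := Relation.TransGen TamariStep

/-- One cover of the right weak Bruhat order on words. -/
inductive BruhatStep : List ℕ → List ℕ → Prop
  | swap (α : List ℕ) {u v : ℕ} (β : List ℕ) : u < v →
      BruhatStep (α ++ u :: v :: β) (α ++ v :: u :: β)

/-- The right weak Bruhat order on words. -/
def BruhatLE : List ℕ → List ℕ → Prop := Relation.ReflTransGen BruhatStep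

/-- Head-insertion index `k(a; σ)`. -/
def kIdx (a : ℕ) (σ : List ℕ) : ℕ := 1 + (σ.filter (· < a)).length


namespace TonksProof


def rk (a : List ℕ) (u : ℕ) : ℕ := (a.filter (· ≤ u)).length

lemma std_eq_map_rk (a : List ℕ) : std a = a.map (rk a) := rfl

lemma rk_eq_countP (a : List ℕ) (u : ℕ) : rk a u = a.countP (· ≤ u) :=
  (List.countP_eq_length_filter).symm

lemma countP_lt_countP {p q : ℕ → Bool} {l : List ℕ}
    (h : ∀ z ∈ l, p z = true → q z = true) {x : ℕ} (hx : x ∈ l)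
    (hpx : p x = false) (hqx : q x = true) :
    l.countP p < l.countP q := by
  induction l with
  | nil => cases hx
  | cons a l ih =>
    simp only [List.countP_cons]
    rcases List.mem_cons.1 hx with rfl | hx
    · have hmono : l.countP p ≤ l.countP q :=
        List.countP_mono_left (fun z hz => h z (List.mem_cons_of_mem _ hz))
      simp [hpx, hqx]; omega
    · have hstep := ih (fun z hz => h z (List.mem_cons_of_mem _ hz)) hx
      by_cases hpa : p a = true
      · have hqa : q a = true := h a (List.mem_cons_self) hpa
        simp [hpa, hqa]; omega
      · simp only [Bool.not_eq_true] at hpa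
        simp [hpa]; split <;> omega

lemma rk_le_of_le (a : List ℕ) {u v : ℕ} (h : u ≤ v) : rk a u ≤ rk a v := by
  rw [rk_eq_countP, rk_eq_countP]
  exact List.countP_mono_left (fun z _ hz => by
    simp only [decide_eq_true_eq] at hz ⊢; omega)

lemma rk_lt_of_lt (a : List ℕ) {u v : ℕ} (hv : v ∈ a) (h : u < v) :
    rk a u < rk a v := by
  rw [rk_eq_countP, rk_eq_countP]
  exact countP_lt_countP
    (fun z _ hz => by simp only [decide_eq_true_eq] at hz ⊢; omega) hv
    (by simp; omega) (by simp)

lemma rk_lt_iff (a : List ℕ) {u v : ℕ} (hu : u ∈ a) (hv : v ∈ a) :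
    rk a u < rk a v ↔ u < v := by
  constructor
  · intro h
    by_contra hn
    have : rk a v ≤ rk a u := rk_le_of_le a (by omega)
    omega
  · exact rk_lt_of_lt a hv

lemma rk_le_iff (a : List ℕ) {u v : ℕ} (hu : u ∈ a) (hv : v ∈ a) :
    rk a u ≤ rk a v ↔ u ≤ v := by
  constructor
  · intro h
    by_contra hn
    have : rk a v < rk a u := rk_lt_of_lt a hu (by omega)
    omega
  · intro h; exact rk_le_of_le a h

lemma length_std (a : List ℕ) : (std a).length = a.length := by
  simp [std_eq_map_rk]

lemma std_map_eq (a : List ℕ) (f : ℕ → ℕ)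
    (h : ∀ u ∈ a, ∀ v ∈ a, (u ≤ v ↔ f u ≤ f v)) :
    std (a.map f) = std a := by
  rw [std_eq_map_rk, std_eq_map_rk, List.map_map]
  apply List.map_congr_left
  intro x hx
  show rk (a.map f) (f x) = rk a x
  rw [rk_eq_countP, rk_eq_countP, List.countP_map]
  apply List.countP_congr
  intro z hz
  simp only [Function.comp_apply, decide_eq_true_eq]
  exact (h z hz x hx).symm

lemma countP_range'_le (n x : ℕ) : (List.range' 1 n).countP (· ≤ x) = min x n := by
  induction n with
  | zero => simp
  | succ n ih =>
    rw [List.range'_concat, List.countP_append, ih]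
    simp only [one_mul, List.countP_cons, List.countP_nil, Nat.zero_add]
    by_cases h : 1 + n ≤ x
    · rw [if_pos (by simpa using h)]
      omega
    · rw [if_neg (by simpa using h)]
      omega

lemma std_eq_self {π : List ℕ} {n : ℕ} (h : π.Perm (List.range' 1 n)) :
    std π = π := by
  rw [std_eq_map_rk]
  conv_rhs => rw [← List.map_id π]
  apply List.map_congr_left
  intro x hx
  have hx' : x ∈ List.range' 1 n := h.mem_iff.1 hx
  have hb : 1 ≤ x ∧ x < 1 + n := List.mem_range'_1.1 hx'
  show rk π x = x
  rw [rk_eq_countP, h.countP_eq, countP_range'_le]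
  omega

lemma std_nodup {a : List ℕ} (h : a.Nodup) : (std a).Nodup := by
  rw [std_eq_map_rk]
  refine List.Nodup.map_on ?_ h
  intro x hx y hy hxy
  by_contra hne
  rcases Nat.lt_or_ge x y with hlt | hge
  · have := rk_lt_of_lt a hy hlt; omega
  · have : y < x := by omega
    have := rk_lt_of_lt a hx this
    omega

lemma std_perm_range {a : List ℕ} (h : a.Nodup) :
    (std a).Perm (List.range' 1 a.length) := by
  have h1 : (std a).Nodup := std_nodup h
  have hsub : std a ⊆ List.range' 1 a.length := by
    intro m hm
    rw [std_eq_map_rk] at hm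
    obtain ⟨x, hx, rfl⟩ := List.mem_map.1 hm
    have h2 : 1 ≤ rk a x := by
      have : x ∈ a.filter (· ≤ x) := List.mem_filter.2 ⟨hx, by simp⟩
      have := List.length_pos_iff.2 (List.ne_nil_of_mem this)
      unfold rk; omega
    have h3 : rk a x ≤ a.length := List.length_filter_le _ _
    exact List.mem_range'_1.2 ⟨h2, by omega⟩
  refine (List.subperm_of_subset h1 hsub).perm_of_length_le ?_
  simp [length_std]

lemma filter_map_eq (a : List ℕ) (f : ℕ → ℕ) (p q : ℕ → Bool)
    (h : ∀ z ∈ a, p (f z) = q z) :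
    (a.map f).filter p = (a.filter q).map f := by
  rw [List.filter_map]
  congr 1
  exact List.filter_congr h

lemma filter_split_length (a : List ℕ) (y : ℕ) :
    (a.filter (· < y)).length + (a.filter (y < ·)).length + a.count y = a.length := by
  induction a with
  | nil => simp
  | cons z l ih =>
    simp only [List.filter_cons, List.count_cons]
    rcases Nat.lt_trichotomy z y with h | h | h
    · simp [h, Nat.ne_of_lt h, Nat.not_lt_of_lt h]; omega
    · subst h; simp; omega
    · simp [h, (Nat.ne_of_lt h).symm, Nat.not_lt_of_lt h, Nat.lt_asymm h]; omega

lemma range'_filter_lt {n y : ℕ} (h1 : 1 ≤ y) (h2 : y ≤ n) :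
    (List.range' 1 n).filter (· < y) = List.range' 1 (y - 1) := by
  have hsplit : List.range' 1 (y-1) ++ List.range' y (n - (y-1)) = List.range' 1 n := by
    have := List.range'_append (s := 1) (m := y-1) (n := n - (y-1)) (step := 1)
    simp only [one_mul] at this
    rw [show 1 + (y-1) = y by omega] at this
    rw [this]; congr 1; omega
  rw [← hsplit, List.filter_append]
  have e1 : (List.range' 1 (y-1)).filter (· < y) = List.range' 1 (y-1) := by
    apply List.filter_eq_self.2
    intro z hz
    have := List.mem_range'_1.1 hz
    simp only [decide_eq_true_eq]; omega
  have e2 : (List.range' y (n - (y-1))).filter (· < y) = [] := by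
    apply List.filter_eq_nil_iff.2
    intro z hz
    have := List.mem_range'_1.1 hz
    simp only [decide_eq_true_eq]; omega
  rw [e1, e2, List.append_nil]

lemma range'_filter_gt {n y : ℕ} (h1 : 1 ≤ y) (h2 : y ≤ n) :
    (List.range' 1 n).filter (y < ·) = List.range' (y+1) (n - y) := by
  have hsplit : List.range' 1 y ++ List.range' (y+1) (n - y) = List.range' 1 n := by
    have := List.range'_append (s := 1) (m := y) (n := n - y) (step := 1)
    simp only [one_mul] at this
    rw [show 1 + y = y + 1 by omega] at this
    rw [this]; congr 1; omega
  rw [← hsplit, List.filter_append]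
  have e1 : (List.range' 1 y).filter (y < ·) = [] := by
    apply List.filter_eq_nil_iff.2
    intro z hz
    have := List.mem_range'_1.1 hz
    simp only [decide_eq_true_eq]; omega
  have e2 : (List.range' (y+1) (n-y)).filter (y < ·) = List.range' (y+1) (n-y) := by
    apply List.filter_eq_self.2
    intro z hz
    have := List.mem_range'_1.1 hz
    simp only [decide_eq_true_eq]; omega
  rw [e1, e2, List.nil_append]

lemma map_sub_range' (y : ℕ) : ∀ (m s : ℕ),
    (List.range' (s + y) m).map (· - y) = List.range' s m := by
  intro m
  induction m with
  | zero => intro s; simp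
  | succ m ih =>
    intro s
    rw [List.range'_succ, List.range'_succ, List.map_cons]
    congr 1
    · omega
    · have := ih (s + 1)
      rw [show s + 1 + y = s + y + 1 by omega] at this
      exact this



lemma tonksPhi_nil : tonksPhi [] = BT.leaf := by
  rw [tonksPhi]; rfl

lemma tonksPhi_last {a : List ℕ} {y : ℕ} (h : a.getLast? = some y) :
    tonksPhi a = BT.node (tonksPhi (std (a.filter (· < y))))
      (tonksPhi (std (a.filter (y < ·)))) := by
  rw [tonksPhi]
  split
  · rename_i h'; rw [h'] at h; cases h
  · rename_i y' h'
    rw [h'] at h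
    injection h with h
    subst h
    rfl

lemma leaves_tonksPhi : ∀ (N : ℕ) (a : List ℕ), a.length ≤ N → a.Nodup →
    (tonksPhi a).leaves = a.length + 1 := by
  intro N
  induction N with
  | zero =>
    intro a ha _
    have : a = [] := List.length_eq_zero_iff.1 (by omega)
    subst this
    simp [tonksPhi_nil, BT.leaves]
  | succ N ih =>
    intro a hlen hnd
    rcases ha : a.getLast? with _ | y
    · have : a = [] := List.getLast?_eq_none_iff.1 ha
      subst this
      simp [tonksPhi_nil, BT.leaves]
    · have hymem : y ∈ a := List.mem_of_mem_getLast? (Option.mem_def.mpr ha)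
      rw [tonksPhi_last ha]
      have hcount : (a.filter (· < y)).length + (a.filter (y < ·)).length + 1 = a.length := by
        have := filter_split_length a y
        rw [List.count_eq_one_of_mem hnd hymem] at this
        omega
      have hl1 : (std (a.filter (· < y))).length ≤ N := by
        rw [length_std]
        have := List.length_filter_le (fun z => decide (y < z)) a
        omega
      have hl2 : (std (a.filter (y < ·))).length ≤ N := by
        rw [length_std]
        have : 1 ≤ (a.filter (· < y)).length + 1 := by omega
        omega
      have h1 := ih _ hl1 (std_nodup (hnd.filter _))
      have h2 := ih _ hl2 (std_nodup (hnd.filter _))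
      simp only [BT.leaves, h1, h2, length_std]
      omega

lemma tonks_cons : ∀ (n : ℕ), ∀ (x : ℕ) (rest : List ℕ),
    (x :: rest).Perm (List.range' 1 n) →
    tonksPhi (x :: rest) = (tonksPhi (std rest)).graft x (BT.node BT.leaf BT.leaf) := by
  intro n
  induction n using Nat.strong_induction_on with
  | _ n ih =>
  intro x rest hperm
  have hnd : (x :: rest).Nodup := hperm.nodup_iff.2 (List.nodup_range' (s := 1) (n := n))
  have hlen : rest.length + 1 = n := by simpa using hperm.length_eq
  have hxmem : x ∈ List.range' 1 n := hperm.mem_iff.1 (List.mem_cons_self)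
  have hxb : 1 ≤ x ∧ x < 1 + n := List.mem_range'_1.1 hxmem
  rcases hr : rest.getLast? with _ | y
  · -- rest = [], n = 1, x = 1
    have hre : rest = [] := List.getLast?_eq_none_iff.1 hr
    subst hre
    simp only [List.length_nil] at hlen
    have hn1 : n = 1 := by omega
    subst hn1
    have hx1 : x = 1 := by omega
    subst hx1
    rw [tonksPhi_last (show ([1] : List ℕ).getLast? = some 1 from rfl)]
    show BT.node (tonksPhi (std [])) (tonksPhi (std []))
        = BT.graft (tonksPhi (std [])) 1 (BT.node BT.leaf BT.leaf)
    rw [show std ([] : List ℕ) = [] from rfl, tonksPhi_nil]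
    rfl
  · -- rest nonempty with last y
    have hymem : y ∈ rest := List.mem_of_mem_getLast? (Option.mem_def.mpr hr)
    have hrnd : rest.Nodup := (List.nodup_cons.1 hnd).2
    have hxnr : x ∉ rest := (List.nodup_cons.1 hnd).1
    have hxy : x ≠ y := fun h => hxnr (h ▸ hymem)
    have hymem' : y ∈ List.range' 1 n := hperm.mem_iff.1 (List.mem_cons_of_mem _ hymem)
    have hyb : 1 ≤ y ∧ y < 1 + n := List.mem_range'_1.1 hymem'
    have hπlast : (x :: rest).getLast? = some y := by
      cases rest with
      | nil => cases hr
      | cons r rs => rw [List.getLast?_cons_cons]; exact hr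
    -- perm facts for the filtered pieces of π
    have hpltperm : ((x :: rest).filter (· < y)).Perm (List.range' 1 (y - 1)) := by
      have := hperm.filter (fun z => decide (z < y))
      rwa [range'_filter_lt hyb.1 (by omega)] at this
    have hpgtperm : ((x :: rest).filter (y < ·)).Perm (List.range' (y+1) (n - y)) := by
      have := hperm.filter (fun z => decide (y < z))
      rwa [range'_filter_gt hyb.1 (by omega)] at this
    -- RHS: structure of tonksPhi (std rest)
    set f : ℕ → ℕ := rk rest with hf
    have hstdrest : std rest = rest.map f := std_eq_map_rk rest
    have hlast' : (rest.map f).getLast? = some (f y) := by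
      rw [List.getLast?_map, hr]; rfl
    have hfiltlt : (rest.map f).filter (· < f y) = (rest.filter (· < y)).map f := by
      apply filter_map_eq
      intro z hz
      apply decide_eq_decide.2
      exact rk_lt_iff rest hz hymem
    have hfiltgt : (rest.map f).filter (f y < ·) = (rest.filter (y < ·)).map f := by
      apply filter_map_eq
      intro z hz
      apply decide_eq_decide.2
      exact rk_lt_iff rest hymem hz
    have hstdA : std ((rest.filter (· < y)).map f) = std (rest.filter (· < y)) := by
      apply std_map_eq
      intro u hu v hv
      exact (rk_le_iff rest (List.mem_of_mem_filter hu) (List.mem_of_mem_filter hv)).symm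
    have hstdB : std ((rest.filter (y < ·)).map f) = std (rest.filter (y < ·)) := by
      apply std_map_eq
      intro u hu v hv
      exact (rk_le_iff rest (List.mem_of_mem_filter hu) (List.mem_of_mem_filter hv)).symm
    have hRHS : tonksPhi (std rest) =
        BT.node (tonksPhi (std (rest.filter (· < y)))) (tonksPhi (std (rest.filter (y < ·)))) := by
      rw [hstdrest, tonksPhi_last hlast', hfiltlt, hfiltgt, hstdA, hstdB]
    rw [tonksPhi_last hπlast, hRHS]
    -- leaves of the left subtree
    have hAnd : (rest.filter (· < y)).Nodup := hrnd.filter _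
    have hleavesL : (tonksPhi (std (rest.filter (· < y)))).leaves
        = (rest.filter (· < y)).length + 1 := by
      rw [← length_std (rest.filter (· < y))]
      exact leaves_tonksPhi _ _ le_rfl (std_nodup hAnd)
    rcases Nat.lt_or_ge x y with hlt | hge
    · -- x < y : graft goes left
      have hfx : (x :: rest).filter (· < y) = x :: rest.filter (· < y) := by
        rw [List.filter_cons, if_pos (by simpa using hlt)]
      have hfx2 : (x :: rest).filter (y < ·) = rest.filter (y < ·) := by
        rw [List.filter_cons, if_neg (by simp; omega)]
      rw [hfx] at hpltperm
      have hAlen : (rest.filter (· < y)).length + 1 = y - 1 := by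
        simpa using hpltperm.length_eq
      have hstdcons : std (x :: rest.filter (· < y)) = x :: rest.filter (· < y) :=
        std_eq_self hpltperm
      have hIH := ih (y - 1) (by omega) x (rest.filter (· < y)) hpltperm
      rw [hfx, hfx2, hstdcons, hIH]
      simp only [BT.graft, hleavesL]
      rw [if_pos (by omega)]
    · -- y < x : graft goes right
      have hgt : y < x := by omega
      have hfx : (x :: rest).filter (· < y) = rest.filter (· < y) := by
        rw [List.filter_cons, if_neg (by simp; omega)]
      have hfx2 : (x :: rest).filter (y < ·) = x :: rest.filter (y < ·) := by
        rw [List.filter_cons, if_pos (by simpa using hgt)]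
      rw [hfx] at hpltperm
      rw [hfx2] at hpgtperm
      have hAlen : (rest.filter (· < y)).length = y - 1 := by
        simpa using hpltperm.length_eq
      -- the subtracted word
      have hmemgt : ∀ z ∈ x :: rest.filter (y < ·), y + 1 ≤ z := by
        intro z hz
        have := List.mem_range'_1.1 (hpgtperm.mem_iff.1 hz)
        omega
      have hmapperm : ((x :: rest.filter (y < ·)).map (· - y)).Perm
          (List.range' 1 (n - y)) := by
        have := hpgtperm.map (· - y)
        rwa [show (List.range' (y+1) (n-y)).map (· - y) = List.range' 1 (n - y) from by
          have := map_sub_range' y (n - y) 1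
          rwa [show 1 + y = y + 1 by omega] at this] at this
      have hstdmap : std (x :: rest.filter (y < ·))
          = (x - y) :: (rest.filter (y < ·)).map (· - y) := by
        have h1 : std ((x :: rest.filter (y < ·)).map (· - y))
            = std (x :: rest.filter (y < ·)) := by
          apply std_map_eq
          intro u hu v hv
          have := hmemgt u hu
          have := hmemgt v hv
          omega
        have h2 := std_eq_self hmapperm
        rw [h1] at h2
        rw [h2]
        rfl
      have hstdtail : std ((rest.filter (y < ·)).map (· - y)) = std (rest.filter (y < ·)) := by
        apply std_map_eq
        intro u hu v hv
        have := hmemgt u (List.mem_cons_of_mem _ hu)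
        have := hmemgt v (List.mem_cons_of_mem _ hv)
        omega
      have hmapperm' : ((x - y) :: (rest.filter (y < ·)).map (· - y)).Perm
          (List.range' 1 (n - y)) := by
        rwa [show ((x - y) :: (rest.filter (y < ·)).map (· - y))
          = (x :: rest.filter (y < ·)).map (· - y) from rfl]
      have hIH := ih (n - y) (by omega) (x - y) ((rest.filter (y < ·)).map (· - y)) hmapperm'
      rw [hfx, hfx2, hstdmap, hIH, hstdtail]
      simp only [BT.graft, hleavesL]
      rw [if_neg (by omega)]
      congr 2
      omega

lemma main_aux : ∀ (N : ℕ) (π : List ℕ) (n : ℕ), π.length ≤ N →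
    π.Perm (List.range' 1 n) → phiHat π = tonksPhi π := by
  intro N
  induction N with
  | zero =>
    intro π n hlen _
    have : π = [] := List.length_eq_zero_iff.1 (by omega)
    subst this
    rw [tonksPhi_nil, phiHat]
  | succ N ih =>
    intro π n hlen hperm
    cases π with
    | nil => rw [tonksPhi_nil, phiHat]
    | cons x rest =>
      have hnd : (x :: rest).Nodup := hperm.nodup_iff.2 (List.nodup_range' (s := 1) (n := n))
      have hrnd : rest.Nodup := (List.nodup_cons.1 hnd).2
      rw [phiHat, tonks_cons n x rest hperm]
      congr 1
      exact ih (std rest) rest.length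
        (by simp only [List.length_cons] at hlen; rw [length_std]; omega)
        (std_perm_range hrnd)

end TonksProof

theorem phiHat_eq_tonksPhi (n : ℕ) (π : List ℕ) (hperm : π.Perm (List.range' 1 n)) :
    phiHat π = tonksPhi π :=
  TonksProof.main_aux π.length π n le_rfl hperm
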